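/- Let $(X_j, X_k)$ and independent copies thereof (four independent copies in total) be jointly Gaussian, each coordinate standard normal, with pairwise correlations $\sigma_{jl}, \sigma_{lm}, \sigma_{mk}, \sigma_{kj} \in [-1,1]$ between the relevant coordinates. Define $V(\sigma_{jl},\sigma_{lm},\sigma_{mk},\sigma_{kj}) = \int e^{-(t_1^2+t_2^2+t_3^2+t_4^2)}(1-e^{-\sigma_{jl}t_1t_2})(1-e^{-\sigma_{lm}t_2t_4})(1-e^{-\sigma_{mk}t_3t_4})(1-e^{-\sigma_{kj}t_1t_3})\,w(t_1)w(t_2)w(t_3)w(t_4)\,dt_1dt_2dt_3dt_4$ with $w(t)=1/(\pi t^2)$. Then $V(\sigma_{jl},\sigma_{lm},\sigma_{mk},\sigma_{kj}) \leq |\sigma_{jl}\sigma_{lm}\sigma_{mk}\sigma_{kj}|\, V(1,1,1,1)$, and $V(1,1,1,1) < \infty$. -/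

import Mathlib

open MeasureTheory Real

/-- The integrand of `V(σ_{jl}, σ_{lm}, σ_{mk}, σ_{kj})` with weight `w(t) = 1/(π t²)`. -/
noncomputable def Vintegrand (a b c d : ℝ) (t : Fin 4 → ℝ) : ℝ :=
  Real.exp (-(t 0 ^ 2 + t 1 ^ 2 + t 2 ^ 2 + t 3 ^ 2)) *
    ((1 - Real.exp (-(a * t 0 * t 1))) * (1 - Real.exp (-(b * t 1 * t 3))) *
      (1 - Real.exp (-(c * t 2 * t 3))) * (1 - Real.exp (-(d * t 0 * t 2)))) *
    (1 / (Real.pi * t 0 ^ 2) * (1 / (Real.pi * t 1 ^ 2)) *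
      (1 / (Real.pi * t 2 ^ 2)) * (1 / (Real.pi * t 3 ^ 2)))

/-- `V(σ_{jl}, σ_{lm}, σ_{mk}, σ_{kj})` for Gaussian covariates. -/
noncomputable def Vfun (a b c d : ℝ) : ℝ :=
  ∫ t : Fin 4 → ℝ, Vintegrand a b c d t

private lemma sinh_param_le {p v : ℝ} (hp0 : 0 ≤ p) (hp1 : p ≤ 1) (hv : 0 ≤ v) :
    Real.sinh (p * v) ≤ p * Real.sinh v := by
  set F : ℝ → ℝ := fun x => p * Real.sinh x - Real.sinh (p * x) with hF
  have hder : ∀ x : ℝ, HasDerivAt F (p * Real.cosh x - Real.cosh (p * x) * p) x := by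
    intro x
    have hin : HasDerivAt (fun y : ℝ => p * y) p x := by
      simpa using (hasDerivAt_id x).const_mul p
    exact ((Real.hasDerivAt_sinh x).const_mul p).sub
      (((Real.hasDerivAt_sinh (p * x)).comp x hin))
  have hmono : MonotoneOn F (Set.Ici (0:ℝ)) := by
    apply monotoneOn_of_deriv_nonneg (convex_Ici 0)
    · exact (Continuous.sub (continuous_const.mul Real.continuous_sinh)
        (Real.continuous_sinh.comp (continuous_const.mul continuous_id))).continuousOn
    · intro x hx
      exact (hder x).differentiableAt.differentiableWithinAt
    · intro x hx
      rw [interior_Ici] at hx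
      rw [(hder x).deriv]
      have hc : Real.cosh (p * x) ≤ Real.cosh x := by
        rw [Real.cosh_le_cosh, abs_mul]
        calc |p| * |x| ≤ 1 * |x| := by
              apply mul_le_mul_of_nonneg_right _ (abs_nonneg x)
              rwa [abs_of_nonneg hp0]
          _ = |x| := one_mul _
      nlinarith
  have h0 : F 0 ≤ F v := hmono (by simp) (by exact hv) hv
  simp only [hF, mul_zero, Real.sinh_zero] at h0
  linarith

private lemma abs_sinh_mul_le {σ : ℝ} (u : ℝ) (hσ : |σ| ≤ 1) :
    |Real.sinh (σ * u)| ≤ |σ| * |Real.sinh u| := by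
  rw [Real.abs_sinh, Real.abs_sinh, abs_mul]
  exact sinh_param_le (abs_nonneg σ) hσ (abs_nonneg u)

private lemma cosh_sub_one_eq (x : ℝ) : Real.cosh x - 1 = 2 * Real.sinh (x/2)^2 := by
  have h1 := Real.cosh_sq (x/2)
  have h2 := Real.cosh_two_mul (x/2)
  rw [show 2*(x/2) = x by ring] at h2
  nlinarith

private lemma cosh_mul_sub_one_le {σ : ℝ} (u : ℝ) (hσ : |σ| ≤ 1) :
    Real.cosh (σ * u) - 1 ≤ |σ| * (Real.cosh u - 1) := by
  rw [cosh_sub_one_eq, cosh_sub_one_eq]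
  have h := abs_sinh_mul_le (u/2) hσ
  rw [show σ * u / 2 = σ * (u/2) by ring]
  have h2 : Real.sinh (σ * (u/2))^2 ≤ (|σ| * |Real.sinh (u/2)|)^2 := by
    rw [← sq_abs]
    exact pow_le_pow_left₀ (abs_nonneg _) h 2
  have h3 : (|σ| * |Real.sinh (u/2)|)^2 = |σ|^2 * Real.sinh (u/2)^2 := by
    rw [mul_pow, sq_abs, sq_abs]
  have h4 : |σ|^2 ≤ |σ| := by nlinarith [abs_nonneg σ]
  nlinarith [sq_nonneg (Real.sinh (u/2))]

private lemma sinh_mul_sinh_nonneg {p q : ℝ} (h : 0 ≤ p * q) :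
    0 ≤ Real.sinh p * Real.sinh q := by
  rcases le_total 0 p with hp | hp <;> rcases le_total 0 q with hq | hq
  · exact mul_nonneg (Real.sinh_nonneg_iff.mpr hp) (Real.sinh_nonneg_iff.mpr hq)
  · have h1 : p * q ≤ 0 := mul_nonpos_of_nonneg_of_nonpos hp hq
    have h2 : p * q = 0 := le_antisymm h1 h
    rcases mul_eq_zero.mp h2 with rfl | rfl <;> simp
  · have h1 : p * q ≤ 0 := mul_nonpos_of_nonpos_of_nonneg hp hq
    have h2 : p * q = 0 := le_antisymm h1 h
    rcases mul_eq_zero.mp h2 with rfl | rfl <;> simp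
  · have h1 := Real.sinh_nonpos_iff.mpr hp
    have h2 := Real.sinh_nonpos_iff.mpr hq
    nlinarith

private lemma sinh_mul_sinh_nonpos {p q : ℝ} (h : p * q ≤ 0) :
    Real.sinh p * Real.sinh q ≤ 0 := by
  rcases le_total 0 p with hp | hp <;> rcases le_total 0 q with hq | hq
  · have h1 : 0 ≤ p * q := mul_nonneg hp hq
    have h2 : p * q = 0 := le_antisymm h h1
    rcases mul_eq_zero.mp h2 with rfl | rfl <;> simp
  · exact mul_nonpos_of_nonneg_of_nonpos (Real.sinh_nonneg_iff.mpr hp) (Real.sinh_nonpos_iff.mpr hq)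
  · exact mul_nonpos_of_nonpos_of_nonneg (Real.sinh_nonpos_iff.mpr hp) (Real.sinh_nonneg_iff.mpr hq)
  · have h1 : 0 ≤ p * q := by nlinarith
    have h2 : p * q = 0 := le_antisymm h h1
    rcases mul_eq_zero.mp h2 with rfl | rfl <;> simp

private lemma sinh_cycle_nonneg (t0 t1 t2 t3 : ℝ) :
    0 ≤ Real.sinh (t0*t1) * Real.sinh (t1*t3) * Real.sinh (t2*t3) * Real.sinh (t0*t2) := by
  rcases le_total 0 (t1 * t2) with h | h
  · have h1 : 0 ≤ Real.sinh (t0*t1) * Real.sinh (t0*t2) :=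
      sinh_mul_sinh_nonneg (by nlinarith [sq_nonneg t0])
    have h2 : 0 ≤ Real.sinh (t1*t3) * Real.sinh (t2*t3) :=
      sinh_mul_sinh_nonneg (by nlinarith [sq_nonneg t3])
    nlinarith
  · have h1 : Real.sinh (t0*t1) * Real.sinh (t0*t2) ≤ 0 :=
      sinh_mul_sinh_nonpos (by nlinarith [sq_nonneg t0])
    have h2 : Real.sinh (t1*t3) * Real.sinh (t2*t3) ≤ 0 :=
      sinh_mul_sinh_nonpos (by nlinarith [sq_nonneg t3])
    nlinarith


noncomputable def hker (x y : ℝ) : ℝ := min 1 (|x * y|)⁻¹ * Real.exp (-((|x| - |y|)^2 / 2))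

lemma hker_nonneg (x y : ℝ) : 0 ≤ hker x y := by
  unfold hker; positivity

private lemma one_sub_exp_neg_abs_le (s : ℝ) :
    |1 - Real.exp (-s)| ≤ Real.exp (max 0 (-s)) * min |s| 1 := by
  rcases le_total 0 s with hs | hs
  · rw [max_eq_left (by linarith), Real.exp_zero, one_mul, abs_of_nonneg (by
      have := Real.exp_le_one_iff.mpr (by linarith : -s ≤ 0); linarith)]
    rw [abs_of_nonneg hs]
    refine le_min ?_ ?_
    · have := Real.add_one_le_exp (-s); linarith
    · have := Real.exp_pos (-s); linarith
  · rw [max_eq_right (by linarith), abs_of_nonpos hs, abs_of_nonpos (by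
      have := Real.one_le_exp_iff.mpr (by linarith : (0:ℝ) ≤ -s); linarith)]
    rcases le_total (-s) 1 with h1 | h1
    · rw [min_eq_left h1]
      have h2 := Real.add_one_le_exp s
      have h3 := Real.exp_pos (-s)
      have h4 : Real.exp s * Real.exp (-s) = 1 := by
        rw [← Real.exp_add]; simp
      nlinarith
    · rw [min_eq_right h1]
      have := Real.exp_pos (-s)
      linarith
private lemma edge_bound {σ : ℝ} (hσ : |σ| ≤ 1) (x y : ℝ) :
    Real.exp (-((x^2+y^2)/2)) * (|1 - Real.exp (-(σ*(x*y)))| * (|x*y|)⁻¹) ≤ hker x y := by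
  have habs : |σ * (x*y)| = |σ| * |x*y| := abs_mul _ _
  have h1 : |1 - Real.exp (-(σ*(x*y)))| * (|x*y|)⁻¹
      ≤ Real.exp (max 0 (-(σ*(x*y)))) * min 1 (|x*y|)⁻¹ := by
    rcases eq_or_ne (x*y) 0 with h0 | h0
    · rw [h0] ; simp
    · have hxy : 0 < |x*y| := abs_pos.mpr h0
      have := one_sub_exp_neg_abs_le (σ*(x*y))
      have h2 : |1 - Real.exp (-(σ*(x*y)))| * (|x*y|)⁻¹
          ≤ (Real.exp (max 0 (-(σ*(x*y)))) * min |σ*(x*y)| 1) * (|x*y|)⁻¹ := by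
        apply mul_le_mul_of_nonneg_right this (by positivity)
      refine h2.trans ?_
      rw [mul_assoc]
      apply mul_le_mul_of_nonneg_left _ (Real.exp_pos _).le
      rw [habs]
      have : min (|σ| * |x*y|) 1 * (|x*y|)⁻¹ = min |σ| (|x*y|)⁻¹ := by
        rw [min_mul_of_nonneg _ _ (by positivity), mul_inv_cancel_right₀ (ne_of_gt hxy)]
        congr 1
        rw [one_mul]
      rw [this]
      exact min_le_min hσ le_rfl
  have h2 : Real.exp (-((x^2+y^2)/2)) * Real.exp (max 0 (-(σ*(x*y))))
      ≤ Real.exp (-((|x|-|y|)^2/2)) := by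
    rw [← Real.exp_add, Real.exp_le_exp]
    have hm : max 0 (-(σ*(x*y))) ≤ |x| * |y| := by
      apply max_le (by positivity)
      calc -(σ*(x*y)) ≤ |σ*(x*y)| := neg_le_abs _
        _ = |σ| * |x*y| := habs
        _ ≤ 1 * |x*y| := by apply mul_le_mul_of_nonneg_right hσ (abs_nonneg _)
        _ = |x| * |y| := by rw [one_mul, abs_mul]
    have hx2 : x^2 = |x|^2 := (sq_abs x).symm
    have hy2 : y^2 = |y|^2 := (sq_abs y).symm
    nlinarith
  calc Real.exp (-((x^2+y^2)/2)) * (|1 - Real.exp (-(σ*(x*y)))| * (|x*y|)⁻¹)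
      ≤ Real.exp (-((x^2+y^2)/2)) * (Real.exp (max 0 (-(σ*(x*y)))) * min 1 (|x*y|)⁻¹) := by
        apply mul_le_mul_of_nonneg_left h1 (Real.exp_pos _).le
    _ = (Real.exp (-((x^2+y^2)/2)) * Real.exp (max 0 (-(σ*(x*y))))) * min 1 (|x*y|)⁻¹ := by ring
    _ ≤ Real.exp (-((|x|-|y|)^2/2)) * min 1 (|x*y|)⁻¹ := by
        apply mul_le_mul_of_nonneg_right h2 (by positivity)
    _ = hker x y := by rw [hker]; ring


lemma hker_measurable : Measurable (fun p : ℝ × ℝ => hker p.1 p.2) := by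
  unfold hker
  apply Measurable.mul
  · exact (measurable_const.min ((measurable_fst.mul measurable_snd).abs.inv))
  · exact (((measurable_fst.abs.sub measurable_snd.abs).pow measurable_const).div_const 2).neg.exp

lemma gauss_shift (c : ℝ) : (∫ y : ℝ, Real.exp (-(y - c)^2)) = Real.sqrt π := by
  calc (∫ y : ℝ, Real.exp (-(y - c)^2)) = ∫ y : ℝ, Real.exp (-1 * (y + (-c))^2) := by
        congr 1; funext y; congr 1; ring
    _ = ∫ y : ℝ, Real.exp (-1 * y^2) := integral_add_right_eq_self (fun y => Real.exp (-1*y^2)) (-c)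
    _ = Real.sqrt (π/1) := integral_gaussian 1
    _ = Real.sqrt π := by norm_num

lemma gauss_shift_integrable (c : ℝ) : Integrable (fun y : ℝ => Real.exp (-(y - c)^2)) := by
  have h : Integrable (fun y : ℝ => Real.exp (-1 * y^2)) := integrable_exp_neg_mul_sq one_pos
  have := h.comp_sub_right c
  apply this.congr
  filter_upwards with y
  congr 1; ring

lemma hker_sq_le_gauss (x y : ℝ) :
    hker x y ^ 2 ≤ Real.exp (-(y - |x|)^2) + Real.exp (-(y + |x|)^2) := by
  have hm : min 1 (|x * y|)⁻¹ ≤ 1 := min_le_left _ _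
  have hm0 : 0 ≤ min 1 (|x * y|)⁻¹ := le_min one_pos.le (by positivity)
  have h1 : hker x y ^2 ≤ Real.exp (-((|x| - |y|)^2/2))^2 := by
    unfold hker
    rw [mul_pow]
    have : min 1 (|x * y|)⁻¹ ^2 ≤ 1 := by nlinarith
    nlinarith [sq_nonneg (Real.exp (-((|x| - |y|)^2 / 2))), Real.exp_pos (-((|x| - |y|)^2 / 2))]
  have h2 : Real.exp (-((|x| - |y|)^2/2))^2 = Real.exp (-(|x| - |y|)^2) := by
    rw [sq, ← Real.exp_add]; congr 1; ring
  rw [h2] at h1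
  refine h1.trans ?_
  rcases le_total 0 y with hy | hy
  · have : (|x| - |y|)^2 = (y - |x|)^2 := by rw [abs_of_nonneg hy]; ring
    rw [this]
    nlinarith [Real.exp_pos (-(y + |x|)^2)]
  · have : (|x| - |y|)^2 = (y + |x|)^2 := by rw [abs_of_nonpos hy]; ring
    rw [this]
    nlinarith [Real.exp_pos (-(y - |x|)^2)]

lemma hker_sq_slice_integrable (x : ℝ) : Integrable (fun y => hker x y ^ 2) := by
  have g2 : Integrable (fun y : ℝ => Real.exp (-(y + |x|)^2)) := by
    have := gauss_shift_integrable (-(|x|))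
    simpa [sub_neg_eq_add] using this
  apply Integrable.mono' ((gauss_shift_integrable (|x|)).add g2)
  · exact ((hker_measurable.comp (measurable_const.prodMk measurable_id)).pow
      measurable_const).aestronglyMeasurable
  · filter_upwards with y
    rw [Real.norm_eq_abs, abs_of_nonneg (by positivity)]
    have := hker_sq_le_gauss x y
    simpa [sub_neg_eq_add] using this


lemma hker_sq_eq (x y : ℝ) :
    hker x y ^ 2 = min 1 (|x * y|)⁻¹ ^ 2 * Real.exp (-(|x| - |y|)^2) := by
  unfold hker
  rw [mul_pow]
  congr 1
  rw [sq, ← Real.exp_add]; congr 1; ring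

lemma exp_split (x y : ℝ) :
    Real.exp (-(|x| - |y|)^2) ≤ Real.exp (-(y - |x|)^2) + Real.exp (-(y + |x|)^2) := by
  rcases le_total 0 y with hy | hy
  · have h : (|x| - |y|)^2 = (y - |x|)^2 := by rw [abs_of_nonneg hy]; ring
    rw [h]
    nlinarith [Real.exp_pos (-(y + |x|)^2)]
  · have h : (|x| - |y|)^2 = (y + |x|)^2 := by rw [abs_of_nonpos hy]; ring
    rw [h]
    nlinarith [Real.exp_pos (-(y - |x|)^2)]

lemma indicator_int (x : ℝ) : Integrable
    (Set.indicator (Set.Icc (-(|x|/2)) (|x|/2)) (fun _ : ℝ => Real.exp (-(x^2/4)))) := by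
  rw [integrable_indicator_iff measurableSet_Icc]
  exact integrableOn_const (by rw [Real.volume_Icc]; exact ENNReal.ofReal_ne_top)

lemma hker_sq_pointwise (x y : ℝ) :
    hker x y ^ 2 ≤ 5*(1+x^2)⁻¹ * (Real.exp (-(y - |x|)^2) + Real.exp (-(y + |x|)^2)) +
      Set.indicator (Set.Icc (-(|x|/2)) (|x|/2)) (fun _ => Real.exp (-(x^2/4))) y := by
  have hpos : (0:ℝ) < 1 + x^2 := by positivity
  set m := min 1 (|x * y|)⁻¹ with hm
  have hm0 : 0 ≤ m := le_min one_pos.le (by positivity)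
  have hm1 : m ≤ 1 := min_le_left _ _
  rw [hker_sq_eq]
  by_cases hy : |x|/2 ≤ |y|
  · have hind : 0 ≤ Set.indicator (Set.Icc (-(|x|/2)) (|x|/2))
        (fun _ => Real.exp (-(x^2/4))) y := by
      apply Set.indicator_nonneg; intro _ _; positivity
    have hxy : x^2/2 ≤ |x * y| := by
      rw [abs_mul]
      have h1 : |x| * (|x|/2) ≤ |x| * |y| := mul_le_mul_of_nonneg_left hy (abs_nonneg x)
      nlinarith [sq_abs x]
    have hmxy : m * |x * y| ≤ 1 := by
      rcases eq_or_lt_of_le (abs_nonneg (x*y)) with h0 | h0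
      · rw [← h0, mul_zero]; norm_num
      · have : m ≤ (|x * y|)⁻¹ := min_le_right _ _
        calc m * |x*y| ≤ (|x*y|)⁻¹ * |x*y| := mul_le_mul_of_nonneg_right this (abs_nonneg _)
          _ = 1 := inv_mul_cancel₀ (ne_of_gt h0)
    have hm2 : m^2 * (1+x^2) ≤ 3 := by nlinarith
    have hm3 : m^2 ≤ 5*(1+x^2)⁻¹ := by
      rw [← le_div_iff₀ hpos] at hm2
      have : (3:ℝ)/(1+x^2) ≤ 5*(1+x^2)⁻¹ := by
        rw [div_eq_mul_inv]
        apply mul_le_mul_of_nonneg_right (by norm_num) (by positivity)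
      linarith
    have := mul_le_mul hm3 (exp_split x y) (Real.exp_pos _).le (by positivity)
    linarith
  · push_neg at hy
    have hmem : y ∈ Set.Icc (-(|x|/2)) (|x|/2) := by
      constructor <;> [nlinarith [neg_abs_le y, le_abs_self y]; nlinarith [le_abs_self y]]
    rw [Set.indicator_of_mem hmem]
    have h1 : m^2 * Real.exp (-(|x| - |y|)^2) ≤ Real.exp (-(x^2/4)) := by
      have he : Real.exp (-(|x| - |y|)^2) ≤ Real.exp (-(x^2/4)) := by
        rw [Real.exp_le_exp]
        nlinarith [abs_nonneg x, abs_nonneg y, sq_abs x]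
      calc m^2 * Real.exp (-(|x| - |y|)^2) ≤ 1 * Real.exp (-(|x| - |y|)^2) := by
            apply mul_le_mul_of_nonneg_right _ (Real.exp_pos _).le; nlinarith
        _ = Real.exp (-(|x| - |y|)^2) := one_mul _
        _ ≤ Real.exp (-(x^2/4)) := he
    have h2 : 0 ≤ 5*(1+x^2)⁻¹ * (Real.exp (-(y - |x|)^2) + Real.exp (-(y + |x|)^2)) := by
      positivity
    linarith

lemma abs_exp_bound (x : ℝ) : |x| * Real.exp (-(x^2/4)) ≤ 32 * (1+x^2)⁻¹ := by
  have hpos : (0:ℝ) < 1 + x^2 := by positivity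
  have hexp : 1 + x^2/4 + (x^2/8)^2 ≤ Real.exp (x^2/4) := by
    have h := Real.add_one_le_exp (x^2/8)
    have h2 : Real.exp (x^2/8) ^ 2 = Real.exp (x^2/4) := by
      rw [sq, ← Real.exp_add]; congr 1; ring
    nlinarith [Real.exp_pos (x^2/8), sq_nonneg (x^2/8)]
  have hr : |x| * (1+x^2) ≤ 32 * (1 + x^2/4 + (x^2/8)^2) := by
    nlinarith [abs_nonneg x, sq_abs x, sq_nonneg (|x| - 2), sq_nonneg (x^2 - 4 * |x|),
      sq_nonneg x, sq_nonneg (|x| * (|x| - 2))]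
  have h3 : |x| * (1+x^2) ≤ 32 * Real.exp (x^2/4) := by nlinarith
  rw [Real.exp_neg, ← div_eq_mul_inv, ← div_eq_mul_inv,
    div_le_div_iff₀ (Real.exp_pos _) hpos]
  linarith

lemma hker_sq_slice_bound (x : ℝ) :
    (∫ y, hker x y ^ 2) ≤ (10*Real.sqrt π + 32) * (1+x^2)⁻¹ := by
  have hpos : (0:ℝ) < 1 + x^2 := by positivity
  have hint1 : Integrable (fun y : ℝ =>
      5*(1+x^2)⁻¹ * (Real.exp (-(y - |x|)^2) + Real.exp (-(y + |x|)^2))) := by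
    apply Integrable.const_mul
    apply (gauss_shift_integrable (|x|)).add
    have := gauss_shift_integrable (-(|x|))
    simpa [sub_neg_eq_add] using this
  have hint2 := indicator_int x
  have hG : Integrable (fun y : ℝ =>
      5*(1+x^2)⁻¹ * (Real.exp (-(y - |x|)^2) + Real.exp (-(y + |x|)^2)) +
      Set.indicator (Set.Icc (-(|x|/2)) (|x|/2)) (fun _ => Real.exp (-(x^2/4))) y) :=
    hint1.add hint2
  have hmono := integral_mono (hker_sq_slice_integrable x) hG
    (fun y => hker_sq_pointwise x y)
  have heq : (∫ y : ℝ, (5*(1+x^2)⁻¹ * (Real.exp (-(y - |x|)^2) + Real.exp (-(y + |x|)^2)) +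
      Set.indicator (Set.Icc (-(|x|/2)) (|x|/2)) (fun _ => Real.exp (-(x^2/4))) y))
      = 10*Real.sqrt π * (1+x^2)⁻¹ + |x| * Real.exp (-(x^2/4)) := by
    rw [integral_add hint1 hint2]
    have e1 : (∫ y : ℝ, 5*(1+x^2)⁻¹ * (Real.exp (-(y - |x|)^2) + Real.exp (-(y + |x|)^2)))
        = 10*Real.sqrt π * (1+x^2)⁻¹ := by
      rw [integral_const_mul]
      have ha : Integrable (fun y : ℝ => Real.exp (-(y + |x|)^2)) := by
        have := gauss_shift_integrable (-(|x|)); simpa [sub_neg_eq_add] using this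
      rw [integral_add (gauss_shift_integrable (|x|)) ha]
      have e2 : (∫ y : ℝ, Real.exp (-(y + |x|)^2)) = Real.sqrt π := by
        rw [show (fun y : ℝ => Real.exp (-(y + |x|)^2)) =
          (fun y : ℝ => Real.exp (-(y - (-(|x|)))^2)) by funext y; rw [sub_neg_eq_add]]
        exact gauss_shift (-(|x|))
      rw [gauss_shift, e2]
      ring
    have e3 : (∫ y : ℝ, Set.indicator (Set.Icc (-(|x|/2)) (|x|/2))
        (fun _ => Real.exp (-(x^2/4))) y) = |x| * Real.exp (-(x^2/4)) := by
      rw [integral_indicator_const _ measurableSet_Icc, Real.volume_real_Icc]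
      rw [show |x|/2 - (-(|x|/2)) = |x| by ring]
      rw [max_eq_left (abs_nonneg x)]
      rw [smul_eq_mul]
    rw [e1, e3]
  rw [heq] at hmono
  have := abs_exp_bound x
  calc (∫ y, hker x y ^ 2) ≤ 10*Real.sqrt π * (1+x^2)⁻¹ + |x| * Real.exp (-(x^2/4)) := hmono
    _ ≤ 10*Real.sqrt π * (1+x^2)⁻¹ + 32 * (1+x^2)⁻¹ := by linarith
    _ = (10*Real.sqrt π + 32) * (1+x^2)⁻¹ := by ring


lemma Fk_integrable : Integrable (fun p : ℝ × ℝ => hker p.1 p.2 ^ 2) := by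
  have hmeas : AEStronglyMeasurable (fun p : ℝ × ℝ => hker p.1 p.2 ^ 2)
      ((volume : Measure ℝ).prod (volume : Measure ℝ)) := by
    exact ((hker_measurable.pow measurable_const)).aestronglyMeasurable
  rw [show (volume : Measure (ℝ × ℝ)) = (volume : Measure ℝ).prod (volume : Measure ℝ) from rfl]
  rw [integrable_prod_iff hmeas]
  constructor
  · filter_upwards with x
    exact hker_sq_slice_integrable x
  · have hb : ∀ x : ℝ, (∫ y, ‖hker x y ^ 2‖) ≤ (10*Real.sqrt π + 32) * (1+x^2)⁻¹ := by
      intro x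
      have : (fun y => ‖hker x y ^ 2‖) = fun y => hker x y ^ 2 := by
        funext y; rw [Real.norm_eq_abs, abs_of_nonneg (by positivity)]
      rw [this]
      exact hker_sq_slice_bound x
    apply Integrable.mono' ((integrable_inv_one_add_sq).const_mul (10*Real.sqrt π + 32))
    · exact hmeas.norm.integral_prod_right'
    · filter_upwards with x
      rw [Real.norm_eq_abs, abs_of_nonneg (integral_nonneg (fun y => norm_nonneg _))]
      exact hb x

-- transfer: for an equiv of index types, the map (t ↦ ((t i, t j), (t k, t l))) is measure preserving
noncomputable def splitMap (e : (Fin 2 ⊕ Fin 2) ≃ Fin 4) : (Fin 4 → ℝ) → (ℝ × ℝ) × (ℝ × ℝ) :=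
  fun t => ((t (e (Sum.inl 0)), t (e (Sum.inl 1))), (t (e (Sum.inr 0)), t (e (Sum.inr 1))))

lemma splitMap_measurePreserving (e : (Fin 2 ⊕ Fin 2) ≃ Fin 4) :
    MeasurePreserving (splitMap e) (volume : Measure (Fin 4 → ℝ))
      ((volume : Measure (ℝ × ℝ)).prod (volume : Measure (ℝ × ℝ))) := by
  have h1 := (volume_measurePreserving_piCongrLeft (fun _ : Fin 4 => ℝ) e).symm
  have h2 := volume_measurePreserving_sumPiEquivProdPi (fun _ : Fin 2 ⊕ Fin 2 => ℝ)
  have h3 := (volume_preserving_finTwoArrow ℝ).prod (volume_preserving_finTwoArrow ℝ)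
  have hcomp := h3.comp (h2.comp h1)
  have : (Prod.map (MeasurableEquiv.finTwoArrow : (Fin 2 → ℝ) ≃ᵐ ℝ × ℝ)
        (MeasurableEquiv.finTwoArrow : (Fin 2 → ℝ) ≃ᵐ ℝ × ℝ)) ∘
      ((MeasurableEquiv.sumPiEquivProdPi (fun _ : Fin 2 ⊕ Fin 2 => ℝ)) ∘
        (MeasurableEquiv.piCongrLeft (fun _ : Fin 4 => ℝ) e).symm) = splitMap e := by
    funext t
    simp only [Function.comp_apply, MeasurableEquiv.coe_sumPiEquivProdPi, Prod.map,
      MeasurableEquiv.finTwoArrow_apply, splitMap, Equiv.sumPiEquivProdPi]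
    simp [MeasurableEquiv.piCongrLeft, Equiv.piCongrLeft, Equiv.piCongrLeft']
  rw [this] at hcomp
  have hvol : (volume : Measure ((ℝ × ℝ) × (ℝ × ℝ))) =
      ((volume : Measure (ℝ × ℝ)).prod (volume : Measure (ℝ × ℝ))) := rfl
  rw [← hvol]
  exact hcomp

lemma pair_integrable (e : (Fin 2 ⊕ Fin 2) ≃ Fin 4) :
    Integrable (fun t : Fin 4 → ℝ =>
      hker (t (e (Sum.inl 0))) (t (e (Sum.inl 1))) ^ 2 *
      hker (t (e (Sum.inr 0))) (t (e (Sum.inr 1))) ^ 2)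
      (volume : Measure (Fin 4 → ℝ)) := by
  have hFG : Integrable (fun p : (ℝ × ℝ) × (ℝ × ℝ) =>
      (hker p.1.1 p.1.2 ^ 2) * (hker p.2.1 p.2.2 ^ 2))
      ((volume : Measure (ℝ × ℝ)).prod (volume : Measure (ℝ × ℝ))) :=
    Fk_integrable.mul_prod Fk_integrable
  have := ((splitMap_measurePreserving e).integrable_comp hFG.aestronglyMeasurable).mpr hFG
  exact this


lemma Vintegrand_abs_le {a b c d : ℝ} (ha : |a| ≤ 1) (hb : |b| ≤ 1) (hc : |c| ≤ 1)
    (hd : |d| ≤ 1) (t : Fin 4 → ℝ) :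
    |Vintegrand a b c d t| ≤ (Real.pi^4)⁻¹ *
      (((hker (t 0) (t 1) * hker (t 2) (t 3))^2 + (hker (t 1) (t 3) * hker (t 0) (t 2))^2) / 2) := by
  set t0 := t 0; set t1 := t 1; set t2 := t 2; set t3 := t 3
  have hpi := Real.pi_pos
  -- rewrite |Vintegrand| as a product of edge quantities times π⁻⁴
  have key : |Vintegrand a b c d t| = (Real.pi^4)⁻¹ *
      ((Real.exp (-((t0^2+t1^2)/2)) * (|1 - Real.exp (-(a*(t0*t1)))| * (|t0*t1|)⁻¹)) *
       (Real.exp (-((t1^2+t3^2)/2)) * (|1 - Real.exp (-(b*(t1*t3)))| * (|t1*t3|)⁻¹)) *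
       (Real.exp (-((t2^2+t3^2)/2)) * (|1 - Real.exp (-(c*(t2*t3)))| * (|t2*t3|)⁻¹)) *
       (Real.exp (-((t0^2+t2^2)/2)) * (|1 - Real.exp (-(d*(t0*t2)))| * (|t0*t2|)⁻¹))) := by
    unfold Vintegrand
    rw [abs_mul, abs_mul]
    rw [abs_of_nonneg (Real.exp_pos _).le]
    rw [show |1 / (Real.pi * t0 ^ 2) * (1 / (Real.pi * t1 ^ 2)) * (1 / (Real.pi * t2 ^ 2)) *
        (1 / (Real.pi * t3 ^ 2))| = 1 / (Real.pi * t0 ^ 2) * (1 / (Real.pi * t1 ^ 2)) *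
        (1 / (Real.pi * t2 ^ 2)) * (1 / (Real.pi * t3 ^ 2)) from
      abs_of_nonneg (by positivity)]
    rw [show -(t0^2+t1^2+t2^2+t3^2) = (-((t0^2+t1^2)/2)) + ((-((t1^2+t3^2)/2)) +
        ((-((t2^2+t3^2)/2)) + (-((t0^2+t2^2)/2)))) by ring]
    rw [Real.exp_add, Real.exp_add, Real.exp_add]
    rw [abs_mul, abs_mul, abs_mul]
    rw [show a * t0 * t1 = a * (t0*t1) by ring, show b * t1 * t3 = b * (t1*t3) by ring,
      show c * t2 * t3 = c * (t2*t3) by ring, show d * t0 * t2 = d * (t0*t2) by ring]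
    have hw : 1 / (Real.pi * t0 ^ 2) * (1 / (Real.pi * t1 ^ 2)) * (1 / (Real.pi * t2 ^ 2)) *
        (1 / (Real.pi * t3 ^ 2)) = (Real.pi^4)⁻¹ *
        ((|t0*t1|)⁻¹ * ((|t1*t3|)⁻¹ * ((|t2*t3|)⁻¹ * (|t0*t2|)⁻¹))) := by
      have h1 : |t0*t1| * (|t1*t3| * (|t2*t3| * |t0*t2|)) = t0^2*t1^2*t2^2*t3^2 := by
        rw [abs_mul, abs_mul, abs_mul, abs_mul]
        rw [show |t0| * |t1| * (|t1| * |t3| * (|t2| * |t3| * (|t0| * |t2|))) =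
          |t0|^2 * |t1|^2 * |t2|^2 * |t3|^2 by ring, sq_abs, sq_abs, sq_abs, sq_abs]
      have h2 : (t0^2*t1^2*t2^2*t3^2)⁻¹ = |t0*t1|⁻¹ * (|t1*t3|⁻¹ * (|t2*t3|⁻¹ * |t0*t2|⁻¹)) := by
        rw [← h1, mul_inv, mul_inv, mul_inv]
      rw [← h2]
      simp only [one_div, mul_inv, inv_pow]
      ring
    rw [hw]
    ring
  rw [key]
  apply mul_le_mul_of_nonneg_left _ (by positivity)
  have e1 := edge_bound ha t0 t1
  have e2 := edge_bound hb t1 t3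
  have e3 := edge_bound hc t2 t3
  have e4 := edge_bound hd t0 t2
  have n1 : (0:ℝ) ≤ Real.exp (-((t0^2+t1^2)/2)) * (|1 - Real.exp (-(a*(t0*t1)))| * (|t0*t1|)⁻¹) := by positivity
  have n2 : (0:ℝ) ≤ Real.exp (-((t1^2+t3^2)/2)) * (|1 - Real.exp (-(b*(t1*t3)))| * (|t1*t3|)⁻¹) := by positivity
  have n3 : (0:ℝ) ≤ Real.exp (-((t2^2+t3^2)/2)) * (|1 - Real.exp (-(c*(t2*t3)))| * (|t2*t3|)⁻¹) := by positivity
  have n4 : (0:ℝ) ≤ Real.exp (-((t0^2+t2^2)/2)) * (|1 - Real.exp (-(d*(t0*t2)))| * (|t0*t2|)⁻¹) := by positivity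
  have prod_le : (Real.exp (-((t0^2+t1^2)/2)) * (|1 - Real.exp (-(a*(t0*t1)))| * (|t0*t1|)⁻¹)) *
       (Real.exp (-((t1^2+t3^2)/2)) * (|1 - Real.exp (-(b*(t1*t3)))| * (|t1*t3|)⁻¹)) *
       (Real.exp (-((t2^2+t3^2)/2)) * (|1 - Real.exp (-(c*(t2*t3)))| * (|t2*t3|)⁻¹)) *
       (Real.exp (-((t0^2+t2^2)/2)) * (|1 - Real.exp (-(d*(t0*t2)))| * (|t0*t2|)⁻¹))
      ≤ hker t0 t1 * hker t1 t3 * hker t2 t3 * hker t0 t2 := by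
    have h12 := mul_le_mul e1 e2 n2 (hker_nonneg t0 t1)
    have h34 := mul_le_mul e3 e4 n4 (hker_nonneg t2 t3)
    have := mul_le_mul h12 h34 (mul_nonneg n3 n4)
      (mul_nonneg (hker_nonneg t0 t1) (hker_nonneg t1 t3))
    calc _ = (Real.exp (-((t0^2+t1^2)/2)) * (|1 - Real.exp (-(a*(t0*t1)))| * (|t0*t1|)⁻¹)) *
       (Real.exp (-((t1^2+t3^2)/2)) * (|1 - Real.exp (-(b*(t1*t3)))| * (|t1*t3|)⁻¹)) *
       ((Real.exp (-((t2^2+t3^2)/2)) * (|1 - Real.exp (-(c*(t2*t3)))| * (|t2*t3|)⁻¹)) *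
       (Real.exp (-((t0^2+t2^2)/2)) * (|1 - Real.exp (-(d*(t0*t2)))| * (|t0*t2|)⁻¹))) := by ring
      _ ≤ hker t0 t1 * hker t1 t3 * (hker t2 t3 * hker t0 t2) := this
      _ = hker t0 t1 * hker t1 t3 * hker t2 t3 * hker t0 t2 := by ring
  refine prod_le.trans ?_
  have g1 := hker_nonneg t0 t1
  have g2 := hker_nonneg t1 t3
  have g3 := hker_nonneg t2 t3
  have g4 := hker_nonneg t0 t2
  nlinarith [sq_nonneg (hker t0 t1 * hker t2 t3 - hker t1 t3 * hker t0 t2)]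


def eA : (Fin 2 ⊕ Fin 2) ≃ Fin 4 where
  toFun := Sum.elim ![0, 1] ![2, 3]
  invFun := ![Sum.inl 0, Sum.inl 1, Sum.inr 0, Sum.inr 1]
  left_inv := by decide
  right_inv := by decide

def eB : (Fin 2 ⊕ Fin 2) ≃ Fin 4 where
  toFun := Sum.elim ![1, 3] ![0, 2]
  invFun := ![Sum.inr 0, Sum.inl 0, Sum.inr 1, Sum.inl 1]
  left_inv := by decide
  right_inv := by decide

lemma intA : Integrable (fun t : Fin 4 → ℝ => hker (t 0) (t 1) ^ 2 * hker (t 2) (t 3) ^ 2)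
    (volume : Measure (Fin 4 → ℝ)) := pair_integrable eA

lemma intB : Integrable (fun t : Fin 4 → ℝ => hker (t 1) (t 3) ^ 2 * hker (t 0) (t 2) ^ 2)
    (volume : Measure (Fin 4 → ℝ)) := pair_integrable eB

lemma Vintegrand_measurable (a b c d : ℝ) : Measurable (Vintegrand a b c d) := by
  unfold Vintegrand
  have h0 : Measurable (fun t : Fin 4 → ℝ => t 0) := measurable_pi_apply 0
  have h1 : Measurable (fun t : Fin 4 → ℝ => t 1) := measurable_pi_apply 1
  have h2 : Measurable (fun t : Fin 4 → ℝ => t 2) := measurable_pi_apply 2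
  have h3 : Measurable (fun t : Fin 4 → ℝ => t 3) := measurable_pi_apply 3
  fun_prop

noncomputable def Dker (t : Fin 4 → ℝ) : ℝ := (Real.pi^4)⁻¹ *
      (((hker (t 0) (t 1) * hker (t 2) (t 3))^2 + (hker (t 1) (t 3) * hker (t 0) (t 2))^2) / 2)

lemma Dker_integrable : Integrable Dker (volume : Measure (Fin 4 → ℝ)) := by
  have h : Integrable (fun t : Fin 4 → ℝ =>
      (hker (t 0) (t 1) ^ 2 * hker (t 2) (t 3) ^ 2 +
        hker (t 1) (t 3) ^ 2 * hker (t 0) (t 2) ^ 2)) := intA.add intB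
  have := (h.div_const 2).const_mul ((Real.pi^4)⁻¹)
  apply this.congr
  filter_upwards with t
  unfold Dker
  rw [mul_pow, mul_pow]

lemma Vintegrand_integrable {a b c d : ℝ} (ha : |a| ≤ 1) (hb : |b| ≤ 1) (hc : |c| ≤ 1)
    (hd : |d| ≤ 1) : Integrable (Vintegrand a b c d) (volume : Measure (Fin 4 → ℝ)) := by
  apply Integrable.mono' Dker_integrable (Vintegrand_measurable a b c d).aestronglyMeasurable
  filter_upwards with t
  rw [Real.norm_eq_abs]
  exact Vintegrand_abs_le ha hb hc hd t


section flip
variable (v : Fin 4 → ℝ)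

noncomputable def flipMap : (Fin 4 → ℝ) → (Fin 4 → ℝ) := fun t i => v i * t i

lemma flipMap_measurable : Measurable (flipMap v) :=
  measurable_pi_iff.mpr fun i => show Measurable (fun t : Fin 4 → ℝ => v i * t i) from by fun_prop

noncomputable def flipEquiv (hv : ∀ i, v i = 1 ∨ v i = -1) : (Fin 4 → ℝ) ≃ᵐ (Fin 4 → ℝ) where
  toFun := flipMap v
  invFun := flipMap v
  left_inv := by
    intro t; funext i; unfold flipMap
    rcases hv i with h | h <;> rw [h] <;> ring
  right_inv := by
    intro t; funext i; unfold flipMap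
    rcases hv i with h | h <;> rw [h] <;> ring
  measurable_toFun := flipMap_measurable v
  measurable_invFun := flipMap_measurable v

lemma flipMap_measurePreserving (hv : ∀ i, v i = 1 ∨ v i = -1) :
    MeasurePreserving (flipMap v) (volume : Measure (Fin 4 → ℝ)) volume := by
  apply volume_preserving_pi
  intro i
  rcases hv i with h | h <;> rw [h]
  · have : (HMul.hMul (1:ℝ)) = (id : ℝ → ℝ) := by funext x; simp
    rw [this]
    exact MeasurePreserving.id (volume : Measure ℝ)
  · have : (HMul.hMul (-1:ℝ)) = (Neg.neg : ℝ → ℝ) := by funext x; simp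
    rw [this]
    exact Measure.measurePreserving_neg volume

lemma Vintegrand_flip (hv : ∀ i, v i = 1 ∨ v i = -1) (a b c d : ℝ) (t : Fin 4 → ℝ) :
    Vintegrand a b c d (flipMap v t) =
      Vintegrand (v 0 * v 1 * a) (v 1 * v 3 * b) (v 2 * v 3 * c) (v 0 * v 2 * d) t := by
  have hsq : ∀ i, (v i)^2 = 1 := by
    intro i; rcases hv i with h | h <;> rw [h] <;> norm_num
  unfold Vintegrand flipMap
  rw [show (v 0 * t 0)^2 + (v 1 * t 1)^2 + (v 2 * t 2)^2 + (v 3 * t 3)^2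
      = t 0^2 + t 1^2 + t 2^2 + t 3^2 by
    rw [mul_pow, mul_pow, mul_pow, mul_pow, hsq 0, hsq 1, hsq 2, hsq 3]; ring]
  rw [show a * (v 0 * t 0) * (v 1 * t 1) = v 0 * v 1 * a * t 0 * t 1 by ring]
  rw [show b * (v 1 * t 1) * (v 3 * t 3) = v 1 * v 3 * b * t 1 * t 3 by ring]
  rw [show c * (v 2 * t 2) * (v 3 * t 3) = v 2 * v 3 * c * t 2 * t 3 by ring]
  rw [show d * (v 0 * t 0) * (v 2 * t 2) = v 0 * v 2 * d * t 0 * t 2 by ring]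
  rw [show (v 0 * t 0)^2 = t 0^2 by rw [mul_pow, hsq 0]; ring]
  rw [show (v 1 * t 1)^2 = t 1^2 by rw [mul_pow, hsq 1]; ring]
  rw [show (v 2 * t 2)^2 = t 2^2 by rw [mul_pow, hsq 2]; ring]
  rw [show (v 3 * t 3)^2 = t 3^2 by rw [mul_pow, hsq 3]; ring]

lemma Vfun_flip (hv : ∀ i, v i = 1 ∨ v i = -1) (a b c d : ℝ) :
    Vfun a b c d = Vfun (v 0 * v 1 * a) (v 1 * v 3 * b) (v 2 * v 3 * c) (v 0 * v 2 * d) := by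
  unfold Vfun
  rw [← (flipMap_measurePreserving v hv).integral_comp
    (MeasurableEquiv.measurableEmbedding (flipEquiv v hv)) (Vintegrand a b c d)]
  congr 1
  funext t
  exact Vintegrand_flip v hv a b c d t
end flip


noncomputable def gfun (a b c d : ℝ) (t : Fin 4 → ℝ) : ℝ :=
  Real.exp (-(t 0 ^ 2 + t 1 ^ 2 + t 2 ^ 2 + t 3 ^ 2)) *
    ((1 - Real.cosh (a * t 0 * t 1)) * (1 - Real.cosh (b * t 1 * t 3)) *
      (1 - Real.cosh (c * t 2 * t 3)) * (1 - Real.cosh (d * t 0 * t 2)) +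
     Real.sinh (a * t 0 * t 1) * Real.sinh (b * t 1 * t 3) *
      Real.sinh (c * t 2 * t 3) * Real.sinh (d * t 0 * t 2)) *
    (1 / (Real.pi * t 0 ^ 2) * (1 / (Real.pi * t 1 ^ 2)) *
      (1 / (Real.pi * t 2 ^ 2)) * (1 / (Real.pi * t 3 ^ 2)))

private lemma flip_sum_identity (x y z w : ℝ) :
    (1 - Real.exp (-x)) * (1 - Real.exp (-y)) * (1 - Real.exp (-z)) * (1 - Real.exp (-w))
  + (1 - Real.exp (-x)) * (1 - Real.exp (-y)) * (1 - Real.exp z) * (1 - Real.exp w)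
  + (1 - Real.exp (-x)) * (1 - Real.exp y) * (1 - Real.exp (-z)) * (1 - Real.exp w)
  + (1 - Real.exp (-x)) * (1 - Real.exp y) * (1 - Real.exp z) * (1 - Real.exp (-w))
  + (1 - Real.exp x) * (1 - Real.exp (-y)) * (1 - Real.exp (-z)) * (1 - Real.exp w)
  + (1 - Real.exp x) * (1 - Real.exp (-y)) * (1 - Real.exp z) * (1 - Real.exp (-w))
  + (1 - Real.exp x) * (1 - Real.exp y) * (1 - Real.exp (-z)) * (1 - Real.exp (-w))
  + (1 - Real.exp x) * (1 - Real.exp y) * (1 - Real.exp z) * (1 - Real.exp w)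
  = 8 * ((1 - Real.cosh x) * (1 - Real.cosh y) * (1 - Real.cosh z) * (1 - Real.cosh w)
       + Real.sinh x * Real.sinh y * Real.sinh z * Real.sinh w) := by
  rw [Real.cosh_eq, Real.cosh_eq, Real.cosh_eq, Real.cosh_eq,
    Real.sinh_eq, Real.sinh_eq, Real.sinh_eq, Real.sinh_eq]
  ring

lemma sum_eq_gfun (a b c d : ℝ) (t : Fin 4 → ℝ) :
    Vintegrand a b c d t + Vintegrand a b (-c) (-d) t + Vintegrand a (-b) c (-d) t +
    Vintegrand a (-b) (-c) d t + Vintegrand (-a) b c (-d) t + Vintegrand (-a) b (-c) d t +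
    Vintegrand (-a) (-b) c d t + Vintegrand (-a) (-b) (-c) (-d) t
    = 8 * gfun a b c d t := by
  unfold Vintegrand gfun
  rw [show -(-a * t 0 * t 1) = a * t 0 * t 1 by ring,
    show -(-b * t 1 * t 3) = b * t 1 * t 3 by ring,
    show -(-c * t 2 * t 3) = c * t 2 * t 3 by ring,
    show -(-d * t 0 * t 2) = d * t 0 * t 2 by ring]
  have key := flip_sum_identity (a * t 0 * t 1) (b * t 1 * t 3) (c * t 2 * t 3) (d * t 0 * t 2)
  linear_combination (Real.exp (-(t 0 ^ 2 + t 1 ^ 2 + t 2 ^ 2 + t 3 ^ 2)) *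
    (1 / (Real.pi * t 0 ^ 2) * (1 / (Real.pi * t 1 ^ 2)) *
      (1 / (Real.pi * t 2 ^ 2)) * (1 / (Real.pi * t 3 ^ 2)))) * key


lemma bracket_le {a b c d : ℝ} (ha : |a| ≤ 1) (hb : |b| ≤ 1) (hc : |c| ≤ 1) (hd : |d| ≤ 1)
    (s1 s2 s3 s4 : ℝ) (hsgn : 0 ≤ Real.sinh s1 * Real.sinh s2 * Real.sinh s3 * Real.sinh s4) :
    (1 - Real.cosh (a * s1)) * (1 - Real.cosh (b * s2)) *
      (1 - Real.cosh (c * s3)) * (1 - Real.cosh (d * s4)) +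
    Real.sinh (a * s1) * Real.sinh (b * s2) * Real.sinh (c * s3) * Real.sinh (d * s4)
    ≤ |a * b * c * d| *
      ((1 - Real.cosh s1) * (1 - Real.cosh s2) * (1 - Real.cosh s3) * (1 - Real.cosh s4) +
       Real.sinh s1 * Real.sinh s2 * Real.sinh s3 * Real.sinh s4) := by
  have habs : |a * b * c * d| = |a| * |b| * |c| * |d| := by
    rw [abs_mul, abs_mul, abs_mul]
  -- cosh part
  have hc1 := cosh_mul_sub_one_le s1 ha
  have hc2 := cosh_mul_sub_one_le s2 hb
  have hc3 := cosh_mul_sub_one_le s3 hc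
  have hc4 := cosh_mul_sub_one_le s4 hd
  have n1 : (0:ℝ) ≤ Real.cosh (a * s1) - 1 := by linarith [Real.one_le_cosh (a * s1)]
  have n2 : (0:ℝ) ≤ Real.cosh (b * s2) - 1 := by linarith [Real.one_le_cosh (b * s2)]
  have n3 : (0:ℝ) ≤ Real.cosh (c * s3) - 1 := by linarith [Real.one_le_cosh (c * s3)]
  have n4 : (0:ℝ) ≤ Real.cosh (d * s4) - 1 := by linarith [Real.one_le_cosh (d * s4)]
  have m1 : (0:ℝ) ≤ Real.cosh s1 - 1 := by linarith [Real.one_le_cosh s1]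
  have m2 : (0:ℝ) ≤ Real.cosh s2 - 1 := by linarith [Real.one_le_cosh s2]
  have m3 : (0:ℝ) ≤ Real.cosh s3 - 1 := by linarith [Real.one_le_cosh s3]
  have m4 : (0:ℝ) ≤ Real.cosh s4 - 1 := by linarith [Real.one_le_cosh s4]
  have hcosh : (Real.cosh (a * s1) - 1) * (Real.cosh (b * s2) - 1) *
      (Real.cosh (c * s3) - 1) * (Real.cosh (d * s4) - 1)
      ≤ (|a| * (Real.cosh s1 - 1)) * (|b| * (Real.cosh s2 - 1)) *
        (|c| * (Real.cosh s3 - 1)) * (|d| * (Real.cosh s4 - 1)) := by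
    have h12 := mul_le_mul hc1 hc2 n2 (by positivity)
    have h123 := mul_le_mul h12 hc3 n3 (by positivity)
    exact mul_le_mul h123 hc4 n4 (by positivity)
  -- sinh part
  have hs1 := abs_sinh_mul_le s1 ha
  have hs2 := abs_sinh_mul_le s2 hb
  have hs3 := abs_sinh_mul_le s3 hc
  have hs4 := abs_sinh_mul_le s4 hd
  have hsinh : Real.sinh (a * s1) * Real.sinh (b * s2) * Real.sinh (c * s3) * Real.sinh (d * s4)
      ≤ (|a| * |Real.sinh s1|) * (|b| * |Real.sinh s2|) *
        (|c| * |Real.sinh s3|) * (|d| * |Real.sinh s4|) := by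
    have h0 : Real.sinh (a * s1) * Real.sinh (b * s2) * Real.sinh (c * s3) * Real.sinh (d * s4)
        ≤ |Real.sinh (a * s1)| * |Real.sinh (b * s2)| * |Real.sinh (c * s3)| *
          |Real.sinh (d * s4)| := by
      calc Real.sinh (a * s1) * Real.sinh (b * s2) * Real.sinh (c * s3) * Real.sinh (d * s4)
          ≤ |Real.sinh (a * s1) * Real.sinh (b * s2) * Real.sinh (c * s3) * Real.sinh (d * s4)| :=
            le_abs_self _
        _ = _ := by rw [abs_mul, abs_mul, abs_mul]
    refine h0.trans ?_
    have h12 := mul_le_mul hs1 hs2 (abs_nonneg _) (by positivity)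
    have h123 := mul_le_mul h12 hs3 (abs_nonneg _) (by positivity)
    exact mul_le_mul h123 hs4 (abs_nonneg _) (by positivity)
  have habs_sinh : |Real.sinh s1| * |Real.sinh s2| * |Real.sinh s3| * |Real.sinh s4|
      = Real.sinh s1 * Real.sinh s2 * Real.sinh s3 * Real.sinh s4 := by
    rw [← abs_mul, ← abs_mul, ← abs_mul]
    exact abs_of_nonneg hsgn
  have hfinal1 : (1 - Real.cosh (a * s1)) * (1 - Real.cosh (b * s2)) *
      (1 - Real.cosh (c * s3)) * (1 - Real.cosh (d * s4))
      ≤ |a * b * c * d| * ((1 - Real.cosh s1) * (1 - Real.cosh s2) *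
        (1 - Real.cosh s3) * (1 - Real.cosh s4)) := by
    have e1 : (1 - Real.cosh (a * s1)) * (1 - Real.cosh (b * s2)) *
        (1 - Real.cosh (c * s3)) * (1 - Real.cosh (d * s4)) =
        (Real.cosh (a * s1) - 1) * (Real.cosh (b * s2) - 1) *
        (Real.cosh (c * s3) - 1) * (Real.cosh (d * s4) - 1) := by ring
    have e2 : |a * b * c * d| * ((1 - Real.cosh s1) * (1 - Real.cosh s2) *
        (1 - Real.cosh s3) * (1 - Real.cosh s4)) =
        (|a| * (Real.cosh s1 - 1)) * (|b| * (Real.cosh s2 - 1)) *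
        (|c| * (Real.cosh s3 - 1)) * (|d| * (Real.cosh s4 - 1)) := by
      rw [habs]; ring
    rw [e1, e2]; exact hcosh
  have hfinal2 : Real.sinh (a * s1) * Real.sinh (b * s2) * Real.sinh (c * s3) *
      Real.sinh (d * s4) ≤ |a * b * c * d| *
      (Real.sinh s1 * Real.sinh s2 * Real.sinh s3 * Real.sinh s4) := by
    refine hsinh.trans ?_
    rw [show (|a| * |Real.sinh s1|) * (|b| * |Real.sinh s2|) * (|c| * |Real.sinh s3|) *
      (|d| * |Real.sinh s4|) = (|a| * |b| * |c| * |d|) *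
      (|Real.sinh s1| * |Real.sinh s2| * |Real.sinh s3| * |Real.sinh s4|) by ring]
    rw [habs_sinh, habs]
  linarith

lemma gfun_le {a b c d : ℝ} (ha : |a| ≤ 1) (hb : |b| ≤ 1) (hc : |c| ≤ 1) (hd : |d| ≤ 1)
    (t : Fin 4 → ℝ) : gfun a b c d t ≤ |a * b * c * d| * gfun 1 1 1 1 t := by
  unfold gfun
  rw [show a * t 0 * t 1 = a * (t 0 * t 1) by ring,
    show b * t 1 * t 3 = b * (t 1 * t 3) by ring,
    show c * t 2 * t 3 = c * (t 2 * t 3) by ring,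
    show d * t 0 * t 2 = d * (t 0 * t 2) by ring,
    show (1:ℝ) * t 0 * t 1 = t 0 * t 1 by ring,
    show (1:ℝ) * t 1 * t 3 = t 1 * t 3 by ring,
    show (1:ℝ) * t 2 * t 3 = t 2 * t 3 by ring,
    show (1:ℝ) * t 0 * t 2 = t 0 * t 2 by ring]
  have hbr := bracket_le ha hb hc hd (t 0 * t 1) (t 1 * t 3) (t 2 * t 3) (t 0 * t 2)
    (sinh_cycle_nonneg (t 0) (t 1) (t 2) (t 3))
  have hE := Real.exp_pos (-(t 0 ^ 2 + t 1 ^ 2 + t 2 ^ 2 + t 3 ^ 2))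
  have hW : (0:ℝ) ≤ 1 / (Real.pi * t 0 ^ 2) * (1 / (Real.pi * t 1 ^ 2)) *
      (1 / (Real.pi * t 2 ^ 2)) * (1 / (Real.pi * t 3 ^ 2)) := by
    have := Real.pi_pos; positivity
  set E := Real.exp (-(t 0 ^ 2 + t 1 ^ 2 + t 2 ^ 2 + t 3 ^ 2))
  set W := 1 / (Real.pi * t 0 ^ 2) * (1 / (Real.pi * t 1 ^ 2)) *
      (1 / (Real.pi * t 2 ^ 2)) * (1 / (Real.pi * t 3 ^ 2))
  set B1 := (1 - Real.cosh (a * (t 0 * t 1))) * (1 - Real.cosh (b * (t 1 * t 3))) *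
      (1 - Real.cosh (c * (t 2 * t 3))) * (1 - Real.cosh (d * (t 0 * t 2))) +
      Real.sinh (a * (t 0 * t 1)) * Real.sinh (b * (t 1 * t 3)) *
      Real.sinh (c * (t 2 * t 3)) * Real.sinh (d * (t 0 * t 2))
  set B2 := (1 - Real.cosh (t 0 * t 1)) * (1 - Real.cosh (t 1 * t 3)) *
      (1 - Real.cosh (t 2 * t 3)) * (1 - Real.cosh (t 0 * t 2)) +
      Real.sinh (t 0 * t 1) * Real.sinh (t 1 * t 3) *
      Real.sinh (t 2 * t 3) * Real.sinh (t 0 * t 2)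
  calc E * B1 * W ≤ E * (|a * b * c * d| * B2) * W := by
        apply mul_le_mul_of_nonneg_right _ hW
        exact mul_le_mul_of_nonneg_left hbr hE.le
    _ = |a * b * c * d| * (E * B2 * W) := by ring


lemma Vfun_flip4 (v0 v1 v2 v3 : ℝ) (h0 : v0 = 1 ∨ v0 = -1) (h1 : v1 = 1 ∨ v1 = -1)
    (h2 : v2 = 1 ∨ v2 = -1) (h3 : v3 = 1 ∨ v3 = -1) (a b c d : ℝ) :
    Vfun a b c d = Vfun (v0 * v1 * a) (v1 * v3 * b) (v2 * v3 * c) (v0 * v2 * d) := by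
  have hv : ∀ i, (![v0, v1, v2, v3] : Fin 4 → ℝ) i = 1 ∨ (![v0, v1, v2, v3] : Fin 4 → ℝ) i = -1 := by
    intro i; fin_cases i <;> simpa
  exact Vfun_flip ![v0, v1, v2, v3] hv a b c d

lemma gfun_key {a b c d : ℝ} (ha : |a| ≤ 1) (hb : |b| ≤ 1) (hc : |c| ≤ 1) (hd : |d| ≤ 1) :
    Vfun a b c d = (∫ t : Fin 4 → ℝ, gfun a b c d t) ∧
      Integrable (gfun a b c d) (volume : Measure (Fin 4 → ℝ)) := by
  have hna : |(-a)| ≤ 1 := by rwa [abs_neg]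
  have hnb : |(-b)| ≤ 1 := by rwa [abs_neg]
  have hnc : |(-c)| ≤ 1 := by rwa [abs_neg]
  have hnd : |(-d)| ≤ 1 := by rwa [abs_neg]
  have I1 := Vintegrand_integrable ha hb hc hd
  have I2 := Vintegrand_integrable ha hb hnc hnd
  have I3 := Vintegrand_integrable ha hnb hc hnd
  have I4 := Vintegrand_integrable ha hnb hnc hd
  have I5 := Vintegrand_integrable hna hb hc hnd
  have I6 := Vintegrand_integrable hna hb hnc hd
  have I7 := Vintegrand_integrable hna hnb hc hd
  have I8 := Vintegrand_integrable hna hnb hnc hnd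
  have J12 : Integrable (fun t : Fin 4 → ℝ => Vintegrand a b c d t +
      Vintegrand a b (-c) (-d) t) volume := I1.add I2
  have J13 : Integrable (fun t : Fin 4 → ℝ => Vintegrand a b c d t +
      Vintegrand a b (-c) (-d) t + Vintegrand a (-b) c (-d) t) volume := J12.add I3
  have J14 : Integrable (fun t : Fin 4 → ℝ => Vintegrand a b c d t +
      Vintegrand a b (-c) (-d) t + Vintegrand a (-b) c (-d) t +
      Vintegrand a (-b) (-c) d t) volume := J13.add I4
  have J15 : Integrable (fun t : Fin 4 → ℝ => Vintegrand a b c d t +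
      Vintegrand a b (-c) (-d) t + Vintegrand a (-b) c (-d) t +
      Vintegrand a (-b) (-c) d t + Vintegrand (-a) b c (-d) t) volume := J14.add I5
  have J16 : Integrable (fun t : Fin 4 → ℝ => Vintegrand a b c d t +
      Vintegrand a b (-c) (-d) t + Vintegrand a (-b) c (-d) t +
      Vintegrand a (-b) (-c) d t + Vintegrand (-a) b c (-d) t +
      Vintegrand (-a) b (-c) d t) volume := J15.add I6
  have J17 : Integrable (fun t : Fin 4 → ℝ => Vintegrand a b c d t +
      Vintegrand a b (-c) (-d) t + Vintegrand a (-b) c (-d) t +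
      Vintegrand a (-b) (-c) d t + Vintegrand (-a) b c (-d) t +
      Vintegrand (-a) b (-c) d t + Vintegrand (-a) (-b) c d t) volume := J16.add I7
  have J18 : Integrable (fun t : Fin 4 → ℝ => Vintegrand a b c d t +
      Vintegrand a b (-c) (-d) t + Vintegrand a (-b) c (-d) t +
      Vintegrand a (-b) (-c) d t + Vintegrand (-a) b c (-d) t +
      Vintegrand (-a) b (-c) d t + Vintegrand (-a) (-b) c d t +
      Vintegrand (-a) (-b) (-c) (-d) t) volume := J17.add I8
  -- integrability of gfun
  have hg_int : Integrable (gfun a b c d) (volume : Measure (Fin 4 → ℝ)) := by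
    apply (J18.const_mul ((8:ℝ)⁻¹)).congr
    filter_upwards with t
    have := sum_eq_gfun a b c d t
    linarith
  refine ⟨?_, hg_int⟩
  -- flips
  have h2 : Vfun a b c d = Vfun a b (-c) (-d) := by
    have := Vfun_flip4 1 1 (-1) 1 (by norm_num) (by norm_num) (by norm_num) (by norm_num) a b c d
    convert this using 2 <;> ring
  have h3 : Vfun a b c d = Vfun a (-b) c (-d) := by
    have := Vfun_flip4 1 1 (-1) (-1) (by norm_num) (by norm_num) (by norm_num) (by norm_num) a b c d
    convert this using 2 <;> ring
  have h4 : Vfun a b c d = Vfun a (-b) (-c) d := by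
    have := Vfun_flip4 1 1 1 (-1) (by norm_num) (by norm_num) (by norm_num) (by norm_num) a b c d
    convert this using 2 <;> ring
  have h5 : Vfun a b c d = Vfun (-a) b c (-d) := by
    have := Vfun_flip4 1 (-1) (-1) (-1) (by norm_num) (by norm_num) (by norm_num) (by norm_num) a b c d
    convert this using 2 <;> ring
  have h6 : Vfun a b c d = Vfun (-a) b (-c) d := by
    have := Vfun_flip4 1 (-1) 1 (-1) (by norm_num) (by norm_num) (by norm_num) (by norm_num) a b c d
    convert this using 2 <;> ring
  have h7 : Vfun a b c d = Vfun (-a) (-b) c d := by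
    have := Vfun_flip4 1 (-1) 1 1 (by norm_num) (by norm_num) (by norm_num) (by norm_num) a b c d
    convert this using 2 <;> ring
  have h8 : Vfun a b c d = Vfun (-a) (-b) (-c) (-d) := by
    have := Vfun_flip4 1 (-1) (-1) 1 (by norm_num) (by norm_num) (by norm_num) (by norm_num) a b c d
    convert this using 2 <;> ring
  -- sum of integrals
  have hsplit : (∫ t : Fin 4 → ℝ, (Vintegrand a b c d t + Vintegrand a b (-c) (-d) t +
      Vintegrand a (-b) c (-d) t + Vintegrand a (-b) (-c) d t + Vintegrand (-a) b c (-d) t +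
      Vintegrand (-a) b (-c) d t + Vintegrand (-a) (-b) c d t +
      Vintegrand (-a) (-b) (-c) (-d) t)) = 8 * Vfun a b c d := by
    rw [integral_add J17 I8, integral_add J16 I7, integral_add J15 I6, integral_add J14 I5,
      integral_add J13 I4, integral_add J12 I3, integral_add I1 I2]
    show Vfun a b c d + Vfun a b (-c) (-d) + Vfun a (-b) c (-d) + Vfun a (-b) (-c) d +
      Vfun (-a) b c (-d) + Vfun (-a) b (-c) d + Vfun (-a) (-b) c d +
      Vfun (-a) (-b) (-c) (-d) = 8 * Vfun a b c d
    rw [← h2, ← h3, ← h4, ← h5, ← h6, ← h7, ← h8]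
    ring
  -- conclude
  have hgg : (∫ t : Fin 4 → ℝ, (8:ℝ) * gfun a b c d t) = 8 * ∫ t : Fin 4 → ℝ, gfun a b c d t :=
    integral_const_mul 8 _
  have heq2 : (∫ t : Fin 4 → ℝ, (8:ℝ) * gfun a b c d t) = 8 * Vfun a b c d := by
    rw [← hsplit]
    congr 1
    funext t
    rw [← sum_eq_gfun a b c d t]
  have : 8 * Vfun a b c d = 8 * ∫ t : Fin 4 → ℝ, gfun a b c d t := by
    rw [← heq2, hgg]
  linarith

/-- For correlations in `[-1,1]`:
`V(σ_{jl}, σ_{lm}, σ_{mk}, σ_{kj}) ≤ |σ_{jl}σ_{lm}σ_{mk}σ_{kj}| V(1,1,1,1)` and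
`V(1,1,1,1) < ∞`. -/
theorem stmt16 (a b c d : ℝ)
    (ha : a ∈ Set.Icc (-1 : ℝ) 1) (hb : b ∈ Set.Icc (-1 : ℝ) 1)
    (hc : c ∈ Set.Icc (-1 : ℝ) 1) (hd : d ∈ Set.Icc (-1 : ℝ) 1) :
    Vfun a b c d ≤ |a * b * c * d| * Vfun 1 1 1 1
      ∧ Integrable (Vintegrand 1 1 1 1) (volume : Measure (Fin 4 → ℝ)) := by
  have ha' : |a| ≤ 1 := abs_le.mpr ⟨ha.1, ha.2⟩
  have hb' : |b| ≤ 1 := abs_le.mpr ⟨hb.1, hb.2⟩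
  have hc' : |c| ≤ 1 := abs_le.mpr ⟨hc.1, hc.2⟩
  have hd' : |d| ≤ 1 := abs_le.mpr ⟨hd.1, hd.2⟩
  have h1 : |(1:ℝ)| ≤ 1 := by norm_num
  obtain ⟨e1, g1int⟩ := gfun_key ha' hb' hc' hd'
  obtain ⟨e2, g2int⟩ := gfun_key h1 h1 h1 h1
  constructor
  · rw [e1, e2]
    calc (∫ t : Fin 4 → ℝ, gfun a b c d t)
        ≤ ∫ t : Fin 4 → ℝ, |a * b * c * d| * gfun 1 1 1 1 t := by
          apply integral_mono g1int (g2int.const_mul _)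
          exact fun t => gfun_le ha' hb' hc' hd' t
      _ = |a * b * c * d| * ∫ t : Fin 4 → ℝ, gfun 1 1 1 1 t := integral_const_mul _ _
  · exact Vintegrand_integrable h1 h1 h1 h1
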